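/- Let h > 0 and c > 0. Then: (a) S_h'(ε) < +∞ for all ε > 0 if and only if I_c(ε) < +∞ for all ε > 0; (b) S_h'(ε) = +∞ for all ε > 0 if and only if I_c(ε) = +∞ for all ε > 0; (c) there exists ε' > 0 such that S_h'(ε) < +∞ for all ε > ε' and S_h'(ε) = +∞ for all ε < ε' if and only if there exists ε* > 0 such that I_c(ε) < +∞ for all ε > ε* and I_c(ε) = +∞ for all ε < ε*. -/

import Mathlib

open MeasureTheory Filter

/-- The squared Frobenius norm of `σ(s)`. -/
noncomputable def F2 {d r : ℕ} (σ : ℝ → Matrix (Fin d) (Fin r) ℝ) (s : ℝ) : ℝ :=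
  ∑ i : Fin d, ∑ j : Fin r, (σ s i j) ^ 2

/-- `θ_h(n)² = ∫_{nh}^{(n+1)h} ‖σ(s)‖_F² ds`. -/
noncomputable def theta2 {d r : ℕ} (σ : ℝ → Matrix (Fin d) (Fin r) ℝ) (h : ℝ) (n : ℕ) : ℝ :=
  ∫ s in ((n : ℝ) * h)..(((n : ℝ) + 1) * h), F2 σ s

/-- The `n`-th summand of `S_h'(ε)`, taken to be `0` when `θ_h(n) = 0`. -/
noncomputable def Sterm {d r : ℕ} (σ : ℝ → Matrix (Fin d) (Fin r) ℝ) (h ε : ℝ) (n : ℕ) : ℝ :=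
  if theta2 σ h n = 0 then 0
  else Real.sqrt (theta2 σ h n) * Real.exp (-(ε ^ 2) / (2 * theta2 σ h n))

/-- `S_h'(ε) = ∑_{n=1}^∞ θ_h(n) exp(-ε²/(2θ_h(n)²)) < +∞`.
Since all summands are nonnegative, finiteness is expressed as summability. -/
def SFinite {d r : ℕ} (σ : ℝ → Matrix (Fin d) (Fin r) ℝ) (h ε : ℝ) : Prop :=
  Summable fun n : ℕ => Sterm σ h ε (n + 1)

/-- `ς_c(t)² = ∫_t^{t+c} ‖σ(s)‖_F² ds`. -/
noncomputable def varsig2 {d r : ℕ} (σ : ℝ → Matrix (Fin d) (Fin r) ℝ) (c t : ℝ) : ℝ :=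
  ∫ s in t..(t + c), F2 σ s

/-- The integrand of `I_c(ε)`, taken to be `0` when `ς_c(t) = 0`. -/
noncomputable def Iterm {d r : ℕ} (σ : ℝ → Matrix (Fin d) (Fin r) ℝ) (c ε t : ℝ) : ℝ :=
  if varsig2 σ c t = 0 then 0
  else Real.sqrt (varsig2 σ c t) * Real.exp (-(ε ^ 2 / 2) / varsig2 σ c t)

/-- `I_c(ε) = ∫_0^∞ ς_c(t) exp(-(ε²/2)/ς_c(t)²) 1_{ς_c(t)>0} dt < +∞`.
Since the integrand is nonnegative, finiteness is expressed via the lower integral. -/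
def IFinite {d r : ℕ} (σ : ℝ → Matrix (Fin d) (Fin r) ℝ) (c ε : ℝ) : Prop :=
  ∫⁻ t in Set.Ici (0 : ℝ), ENNReal.ofReal (Iterm σ c ε t) < ⊤


noncomputable def g (ε x : ℝ) : ℝ :=
  if x = 0 then 0 else Real.sqrt x * Real.exp (-(ε ^ 2 / 2) / x)

lemma g_nonneg (ε x : ℝ) : 0 ≤ g ε x := by
  unfold g; split
  · exact le_refl 0
  · exact mul_nonneg (Real.sqrt_nonneg _) (Real.exp_nonneg _)

lemma g_mono (ε : ℝ) {x y : ℝ} (hx : 0 ≤ x) (hxy : x ≤ y) : g ε x ≤ g ε y := by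
  rcases eq_or_lt_of_le hx with h0 | h0
  · rw [g, if_pos h0.symm]
    exact g_nonneg ε y
  · have hy : 0 < y := lt_of_lt_of_le h0 hxy
    rw [g, g, if_neg (ne_of_gt h0), if_neg (ne_of_gt hy)]
    apply mul_le_mul (Real.sqrt_le_sqrt hxy) _ (Real.exp_nonneg _) (Real.sqrt_nonneg _)
    apply Real.exp_le_exp.mpr
    rw [neg_div, neg_div, neg_le_neg_iff]
    exact div_le_div_of_nonneg_left (by positivity) h0 hxy

lemma g_scale (ε : ℝ) {K : ℝ} (hK : 0 < K) (x : ℝ) :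
    g ε (K * x) = Real.sqrt K * g (ε / Real.sqrt K) x := by
  rcases eq_or_ne x 0 with rfl | hx
  · simp [g]
  · have hKx : K * x ≠ 0 := mul_ne_zero (ne_of_gt hK) hx
    have hsK : (0:ℝ) < Real.sqrt K := Real.sqrt_pos.mpr hK
    rw [g, g, if_neg hKx, if_neg hx, Real.sqrt_mul (le_of_lt hK)]
    have : -((ε / Real.sqrt K) ^ 2 / 2) / x = -(ε ^ 2 / 2) / (K * x) := by
      rw [div_pow, Real.sq_sqrt (le_of_lt hK)]
      ring
    rw [this]; ring

lemma g_sum_le (ε : ℝ) (m : ℕ) (hm : 0 < m) (x : ℕ → ℝ) (hx : ∀ i, 0 ≤ x i) :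
    g ε (∑ i ∈ Finset.range m, x i) ≤
      Real.sqrt m * ∑ i ∈ Finset.range m, g (ε / Real.sqrt m) (x i) := by
  obtain ⟨i₀, hi₀, hmax⟩ := Finset.exists_max_image (Finset.range m) x
    ⟨0, Finset.mem_range.mpr hm⟩
  have hmR : (0:ℝ) < m := Nat.cast_pos.mpr hm
  have h1 : ∑ i ∈ Finset.range m, x i ≤ (m : ℝ) * x i₀ := by
    calc ∑ i ∈ Finset.range m, x i ≤ ∑ _i ∈ Finset.range m, x i₀ :=
          Finset.sum_le_sum fun i hi => hmax i hi
      _ = (m : ℝ) * x i₀ := by simp [mul_comm]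
  calc g ε (∑ i ∈ Finset.range m, x i) ≤ g ε ((m : ℝ) * x i₀) :=
        g_mono ε (Finset.sum_nonneg fun i _ => hx i) h1
    _ = Real.sqrt m * g (ε / Real.sqrt m) (x i₀) := g_scale ε hmR _
    _ ≤ Real.sqrt m * ∑ i ∈ Finset.range m, g (ε / Real.sqrt m) (x i) := by
        apply mul_le_mul_of_nonneg_left _ (Real.sqrt_nonneg _)
        exact Finset.single_le_sum (fun i _ => g_nonneg _ _) hi₀

lemma g_measurable (ε : ℝ) : Measurable (g ε) := by
  have hset : MeasurableSet {x : ℝ | x = 0} := by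
    simpa using measurableSet_singleton (0:ℝ)
  exact Measurable.ite hset measurable_const
    (Real.continuous_sqrt.measurable.mul
      (Real.measurable_exp.comp (measurable_const.div measurable_id)))

variable {d r : ℕ} (σ : ℝ → Matrix (Fin d) (Fin r) ℝ)

lemma F2_nonneg (s : ℝ) : 0 ≤ F2 σ s := by
  apply Finset.sum_nonneg; intro i _
  exact Finset.sum_nonneg fun j _ => sq_nonneg _

noncomputable def fbar (s : ℝ) : ℝ := F2 σ (max s 0)

lemma fbar_nonneg (s : ℝ) : 0 ≤ fbar σ s := F2_nonneg σ _

lemma fbar_cont (hσ : ContinuousOn σ (Set.Ici 0)) : Continuous (fbar σ) := by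
  have hF2 : ContinuousOn (F2 σ) (Set.Ici 0) := by
    apply continuousOn_finset_sum; intro i _
    apply continuousOn_finset_sum; intro j _
    have : ContinuousOn (fun s => σ s i j) (Set.Ici 0) := by
      have h1 : Continuous fun M : Matrix (Fin d) (Fin r) ℝ => M i j :=
        (continuous_apply j).comp (continuous_apply i)
      exact h1.comp_continuousOn hσ
    exact this.pow 2
  exact hF2.comp_continuous (continuous_id.max continuous_const) fun x => Set.mem_Ici.mpr (le_max_right _ _)

lemma fbar_eq {s : ℝ} (hs : 0 ≤ s) : fbar σ s = F2 σ s := by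
  rw [fbar, max_eq_left hs]

lemma fbar_intervalIntegrable (hσ : ContinuousOn σ (Set.Ici 0)) (a b : ℝ) :
    IntervalIntegrable (fbar σ) volume a b :=
  (fbar_cont σ hσ).intervalIntegrable a b

lemma integral_fbar_eq {a b : ℝ} (ha : 0 ≤ a) (hb : 0 ≤ b) :
    ∫ s in a..b, F2 σ s = ∫ s in a..b, fbar σ s := by
  apply intervalIntegral.integral_congr
  intro s hs
  have : 0 ≤ s := le_trans (le_min ha hb) hs.1
  exact (fbar_eq σ this).symm

lemma integral_fbar_nonneg (hσ : ContinuousOn σ (Set.Ici 0)) {a b : ℝ} (hab : a ≤ b) :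
    0 ≤ ∫ s in a..b, fbar σ s :=
  intervalIntegral.integral_nonneg hab fun s _ => fbar_nonneg σ s

lemma integral_fbar_mono (hσ : ContinuousOn σ (Set.Ici 0)) {a b a' b' : ℝ}
    (h1 : a' ≤ a) (h2 : a ≤ b) (h3 : b ≤ b') :
    ∫ s in a..b, fbar σ s ≤ ∫ s in a'..b', fbar σ s := by
  apply intervalIntegral.integral_mono_interval h1 h2 h3
  · exact Filter.Eventually.of_forall fun s => fbar_nonneg σ s
  · exact fbar_intervalIntegrable σ hσ a' b'

lemma sum_fbar_blocks (hσ : ContinuousOn σ (Set.Ici 0)) (a : ℝ) (δ : ℝ) (m : ℕ) :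
    ∑ i ∈ Finset.range m, ∫ s in (a + i * δ)..(a + (i + 1) * δ), fbar σ s
      = ∫ s in a..(a + m * δ), fbar σ s := by
  have := intervalIntegral.sum_integral_adjacent_intervals
    (a := fun i : ℕ => a + i * δ) (μ := volume) (f := fbar σ) (n := m)
    (fun k _ => fbar_intervalIntegrable σ hσ _ _)
  simpa using this

noncomputable def th' (h : ℝ) (n : ℕ) : ℝ := ∫ s in ((n:ℝ)*h)..(((n:ℝ)+1)*h), fbar σ s
noncomputable def vs' (c t : ℝ) : ℝ := ∫ s in t..(t+c), fbar σ s

lemma theta2_eq {h : ℝ} (hh : 0 ≤ h) (n : ℕ) : theta2 σ h n = th' σ h n := by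
  apply integral_fbar_eq σ (by positivity) (by positivity)

lemma varsig2_eq {c t : ℝ} (hc : 0 ≤ c) (ht : 0 ≤ t) : varsig2 σ c t = vs' σ c t := by
  apply integral_fbar_eq σ ht (by positivity)

lemma th'_nonneg (hσ : ContinuousOn σ (Set.Ici 0)) {h : ℝ} (hh : 0 ≤ h) (n : ℕ) :
    0 ≤ th' σ h n :=
  integral_fbar_nonneg σ hσ (by nlinarith [Nat.cast_nonneg (α := ℝ) n])

lemma vs'_nonneg (hσ : ContinuousOn σ (Set.Ici 0)) {c : ℝ} (hc : 0 ≤ c) (t : ℝ) :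
    0 ≤ vs' σ c t :=
  integral_fbar_nonneg σ hσ (by linarith)

lemma vs'_cont (hσ : ContinuousOn σ (Set.Ici 0)) (c : ℝ) : Continuous (vs' σ c) := by
  have hint : ∀ a b : ℝ, IntervalIntegrable (fbar σ) volume a b :=
    fbar_intervalIntegrable σ hσ
  have hG : Continuous fun u => ∫ s in (0:ℝ)..u, fbar σ s :=
    intervalIntegral.continuous_primitive hint 0
  have : ∀ t, vs' σ c t = (∫ s in (0:ℝ)..(t+c), fbar σ s) - ∫ s in (0:ℝ)..t, fbar σ s := by
    intro t
    rw [vs', ← intervalIntegral.integral_interval_sub_left (hint 0 (t+c)) (hint 0 t)]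
  rw [funext this]
  exact (hG.comp (continuous_id.add continuous_const)).sub hG

lemma Iterm_eq_g (c ε t : ℝ) : Iterm σ c ε t = g ε (varsig2 σ c t) := rfl

lemma Sterm_eq_g (h ε : ℝ) (n : ℕ) : Sterm σ h ε n = g ε (theta2 σ h n) := by
  rw [Sterm, g]
  rcases eq_or_ne (theta2 σ h n) 0 with h0 | h0
  · rw [if_pos h0, if_pos h0]
  · rw [if_neg h0, if_neg h0]
    congr 1
    congr 1
    ring

lemma Sterm_nonneg (h ε : ℝ) (n : ℕ) : 0 ≤ Sterm σ h ε n := by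
  rw [Sterm_eq_g]; exact g_nonneg _ _

lemma Iterm_nonneg (c ε t : ℝ) : 0 ≤ Iterm σ c ε t := g_nonneg _ _

lemma g_anti (x : ℝ) {a b : ℝ} (ha : 0 ≤ a) (hab : a ≤ b) : g b x ≤ g a x := by
  rcases eq_or_ne x 0 with rfl | hx
  · simp [g]
  · rw [g, g, if_neg hx, if_neg hx]
    rcases lt_or_ge x 0 with hneg | hpos
    · rw [Real.sqrt_eq_zero_of_nonpos (le_of_lt hneg)]
      simp
    · have hx' : 0 < x := lt_of_le_of_ne hpos (Ne.symm hx)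
      apply mul_le_mul_of_nonneg_left _ (Real.sqrt_nonneg _)
      apply Real.exp_le_exp.mpr
      rw [neg_div, neg_div, neg_le_neg_iff]
      gcongr


lemma SFinite_mono {h : ℝ} {a b : ℝ} (ha : 0 < a) (hab : a ≤ b)
    (hS : SFinite σ h a) : SFinite σ h b := by
  apply Summable.of_nonneg_of_le (fun n => Sterm_nonneg σ h b _) _ hS
  intro n
  rw [Sterm_eq_g, Sterm_eq_g]
  exact g_anti _ ha.le hab

lemma IFinite_mono {c : ℝ} {a b : ℝ} (ha : 0 < a) (hab : a ≤ b)
    (hI : IFinite σ c a) : IFinite σ c b := by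
  refine lt_of_le_of_lt ?_ hI
  apply lintegral_mono_ae
  apply (ae_restrict_iff' measurableSet_Ici).mpr
  apply Filter.Eventually.of_forall
  intro t ht
  apply ENNReal.ofReal_le_ofReal
  rw [Iterm_eq_g, Iterm_eq_g]
  exact g_anti _ ha.le hab

lemma floor_block {h t : ℝ} (hh : 0 < h) (ht : 0 ≤ t) :
    t ∈ Set.Ico ((⌊t / h⌋₊ : ℝ) * h) (((⌊t / h⌋₊ : ℝ) + 1) * h) := by
  have h1 : (⌊t / h⌋₊ : ℝ) ≤ t / h := Nat.floor_le (by positivity)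
  have h2 : t / h < (⌊t / h⌋₊ : ℝ) + 1 := Nat.lt_floor_add_one _
  constructor
  · calc (⌊t / h⌋₊ : ℝ) * h ≤ (t / h) * h := mul_le_mul_of_nonneg_right h1 hh.le
      _ = t := div_mul_cancel₀ t hh.ne'
  · calc t = (t / h) * h := (div_mul_cancel₀ t hh.ne').symm
      _ < ((⌊t / h⌋₊ : ℝ) + 1) * h := mul_lt_mul_of_pos_right h2 hh

lemma SI (hσ : ContinuousOn σ (Set.Ici 0)) {h c ε : ℝ} (hh : 0 < h) (hc : 0 < c)
    (hε : 0 < ε) (hS : SFinite σ h ε) :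
    IFinite σ c (Real.sqrt ((⌈c / h⌉₊ : ℝ) + 1) * ε) := by
  set m : ℕ := ⌈c / h⌉₊ with hm
  set K : ℝ := Real.sqrt ((m : ℝ) + 1) with hK
  have hKpos : 0 < K := Real.sqrt_pos.mpr (by positivity)
  have hch : c ≤ (m : ℝ) * h := by
    rw [← div_le_iff₀ hh]; exact Nat.le_ceil _
  -- pointwise bound on each block
  have key : ∀ n : ℕ, ∀ t ∈ Set.Ico ((n : ℝ) * h) (((n : ℝ) + 1) * h),
      Iterm σ c (K * ε) t ≤ K * ∑ j ∈ Finset.range (m + 1), Sterm σ h ε (n + j) := by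
    intro n t ht
    have ht0 : 0 ≤ t := le_trans (by positivity) ht.1
    have hsum : ∑ j ∈ Finset.range (m + 1), th' σ h (n + j)
        = ∫ s in ((n : ℝ) * h)..((n : ℝ) * h + (m + 1 : ℕ) * h), fbar σ s := by
      rw [← sum_fbar_blocks σ hσ ((n : ℝ) * h) h (m + 1)]
      apply Finset.sum_congr rfl
      intro j _
      rw [th']
      congr 1 <;> push_cast <;> ring
    have hv : varsig2 σ c t ≤ ∑ j ∈ Finset.range (m + 1), th' σ h (n + j) := by
      rw [varsig2_eq σ hc.le ht0, hsum, vs']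
      apply integral_fbar_mono σ hσ ht.1 (by linarith)
      push_cast
      nlinarith [ht.2]
    calc Iterm σ c (K * ε) t = g (K * ε) (varsig2 σ c t) := rfl
      _ ≤ g (K * ε) (∑ j ∈ Finset.range (m + 1), th' σ h (n + j)) := by
          apply g_mono _ _ hv
          rw [varsig2_eq σ hc.le ht0]
          exact vs'_nonneg σ hσ hc.le t
      _ ≤ Real.sqrt ((m + 1 : ℕ) : ℝ) * ∑ j ∈ Finset.range (m + 1),
            g (K * ε / Real.sqrt ((m + 1 : ℕ) : ℝ)) (th' σ h (n + j)) := by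
          apply g_sum_le (K * ε) (m + 1) (Nat.succ_pos m) _
            (fun j => th'_nonneg σ hσ hh.le (n + j))
      _ = K * ∑ j ∈ Finset.range (m + 1), Sterm σ h ε (n + j) := by
          have hcast : ((m + 1 : ℕ) : ℝ) = (m : ℝ) + 1 := by push_cast; ring
          rw [hcast, ← hK]
          congr 1
          apply Finset.sum_congr rfl
          intro j _
          rw [mul_div_cancel_left₀ _ (ne_of_gt hKpos)]
          rw [Sterm_eq_g, theta2_eq σ hh.le]
    -- end key
  -- summable shifts
  have hbase : Summable fun n : ℕ => Sterm σ h ε n := (summable_nat_add_iff 1).mp hS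
  have hshift : ∀ j : ℕ, (∑' n : ℕ, ENNReal.ofReal (Sterm σ h ε (n + j))) < ⊤ := by
    intro j
    have : Summable fun n : ℕ => Sterm σ h ε (n + j) := (summable_nat_add_iff j).mpr hbase
    rw [← ENNReal.ofReal_tsum_of_nonneg (fun n => Sterm_nonneg σ h ε (n + j)) this]
    exact ENNReal.ofReal_lt_top
  -- assemble
  rw [IFinite]
  have hcover : Set.Ici (0:ℝ) ⊆ ⋃ n : ℕ, Set.Ico ((n : ℝ) * h) (((n : ℝ) + 1) * h) := by
    intro t ht
    exact Set.mem_iUnion.mpr ⟨⌊t / h⌋₊, floor_block hh ht⟩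
  calc ∫⁻ t in Set.Ici (0:ℝ), ENNReal.ofReal (Iterm σ c (K * ε) t)
      ≤ ∫⁻ t in ⋃ n : ℕ, Set.Ico ((n : ℝ) * h) (((n : ℝ) + 1) * h),
          ENNReal.ofReal (Iterm σ c (K * ε) t) :=
        lintegral_mono_set hcover
    _ ≤ ∑' n : ℕ, ∫⁻ t in Set.Ico ((n : ℝ) * h) (((n : ℝ) + 1) * h),
          ENNReal.ofReal (Iterm σ c (K * ε) t) :=
        lintegral_iUnion_le _ _
    _ ≤ ∑' n : ℕ, (ENNReal.ofReal (K * ∑ j ∈ Finset.range (m + 1), Sterm σ h ε (n + j))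
          * ENNReal.ofReal h) := by
        apply ENNReal.tsum_le_tsum
        intro n
        calc ∫⁻ t in Set.Ico ((n : ℝ) * h) (((n : ℝ) + 1) * h),
              ENNReal.ofReal (Iterm σ c (K * ε) t)
            ≤ ∫⁻ _t in Set.Ico ((n : ℝ) * h) (((n : ℝ) + 1) * h),
              ENNReal.ofReal (K * ∑ j ∈ Finset.range (m + 1), Sterm σ h ε (n + j)) := by
              apply setLIntegral_mono measurable_const
              intro t ht
              exact ENNReal.ofReal_le_ofReal (key n t ht)
          _ = ENNReal.ofReal (K * ∑ j ∈ Finset.range (m + 1), Sterm σ h ε (n + j))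
              * ENNReal.ofReal h := by
              rw [setLIntegral_const, Real.volume_Ico]
              congr 1
              congr 1
              ring
    _ < ⊤ := by
        have hexp : ∀ n : ℕ,
            ENNReal.ofReal (K * ∑ j ∈ Finset.range (m + 1), Sterm σ h ε (n + j))
              * ENNReal.ofReal h
            ≤ ENNReal.ofReal h * ENNReal.ofReal K *
                ∑ j ∈ Finset.range (m + 1), ENNReal.ofReal (Sterm σ h ε (n + j)) := by
          intro n
          rw [ENNReal.ofReal_mul hKpos.le]
          rw [ENNReal.ofReal_sum_of_nonneg (fun j _ => Sterm_nonneg σ h ε (n + j))]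
          exact le_of_eq (by ring)
        apply lt_of_le_of_lt (ENNReal.tsum_le_tsum hexp)
        rw [ENNReal.tsum_mul_left]
        have hsum2 : (∑' n : ℕ, ∑ j ∈ Finset.range (m + 1),
              ENNReal.ofReal (Sterm σ h ε (n + j)))
            = ∑ j ∈ Finset.range (m + 1), ∑' n : ℕ, ENNReal.ofReal (Sterm σ h ε (n + j)) :=
          Summable.tsum_finsetSum (fun j _ => ENNReal.summable)
        rw [hsum2]
        exact ENNReal.mul_lt_top (by finiteness)
          (ENNReal.sum_lt_top.mpr fun j _ => hshift j)

lemma g_pair (ε x y : ℝ) (hx : 0 ≤ x) (hy : 0 ≤ y) :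
    g ε (x + y) ≤ Real.sqrt 2 * (g (ε / Real.sqrt 2) x + g (ε / Real.sqrt 2) y) := by
  have := g_sum_le ε 2 (by norm_num) (fun i => if i = 0 then x else y)
    (fun i => by show 0 ≤ (if i = 0 then x else y); split <;> assumption)
  simp only [Finset.sum_range_succ, Finset.sum_range_one] at this
  norm_num at this
  convert this using 3 <;> norm_num

lemma IS (hσ : ContinuousOn σ (Set.Ici 0)) {h c ε : ℝ} (hh : 0 < h) (hc : 0 < c)
    (hε : 0 < ε) (hI : IFinite σ c ε) :
    SFinite σ h (Real.sqrt ((⌈h / c⌉₊ : ℝ)) * (Real.sqrt 2 * ε)) := by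
  set m' : ℕ := ⌈h / c⌉₊ with hm'
  have hm'pos : 0 < m' := Nat.ceil_pos.mpr (by positivity)
  set ε₁ : ℝ := Real.sqrt 2 * ε with hε₁
  set εS : ℝ := Real.sqrt ((m' : ℝ)) * ε₁ with hεS
  set mb : ℕ := ⌈c / h⌉₊ with hmb
  set N : ℕ := mb + 1 with hN
  set M : ℕ := 2 * mb + 2 with hM
  have hNh : c ≤ (N : ℝ) * h := by
    have : c / h ≤ (mb : ℝ) := Nat.le_ceil _
    rw [div_le_iff₀ hh] at this
    rw [hN]
    push_cast
    nlinarith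
  have hm'c : h ≤ (m' : ℝ) * c := by
    have : h / c ≤ (m' : ℝ) := Nat.le_ceil _
    rwa [div_le_iff₀ hc] at this
  have hm'c2 : ((m' : ℝ) - 1) * c ≤ h := by
    have : (m' : ℝ) - 1 < h / c := by
      have := Nat.ceil_lt_add_one (le_of_lt (by positivity : (0:ℝ) < h / c))
      push_cast at this ⊢
      linarith
    rw [lt_div_iff₀ hc] at this
    linarith
  -- the measurable integrand
  set G : ℝ → ENNReal := fun t => ENNReal.ofReal (g ε (vs' σ c t)) with hG
  have hGmeas : Measurable G :=
    ENNReal.measurable_ofReal.comp ((g_measurable ε).comp (vs'_cont σ hσ c).measurable)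
  have hGI : ∀ t, 0 ≤ t → G t = ENNReal.ofReal (Iterm σ c ε t) := by
    intro t ht
    rw [hG, Iterm_eq_g, varsig2_eq σ hc.le ht]
  -- A_n
  set A : ℕ → Set ℝ := fun n => Set.Ico ((n : ℝ) * h - c) ((n : ℝ) * h + h + c) with hA
  -- step 1: key bound:  ofReal c * Sterm εS n ≤ C * ∫⁻_{A n} G  for n ≥ N
  have key : ∀ n : ℕ, N ≤ n →
      ENNReal.ofReal c * ENNReal.ofReal (Sterm σ h εS n)
        ≤ (ENNReal.ofReal (Real.sqrt m') * (m' : ENNReal) *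
            (ENNReal.ofReal (Real.sqrt 2) * 2)) * ∫⁻ t in A n, G t := by
    intro n hn
    have hnc : c ≤ (n : ℝ) * h := le_trans hNh
      (mul_le_mul_of_nonneg_right (Nat.cast_le.mpr hn) hh.le)
    -- θ² ≤ Σ vs'(t_i)
    have hθ : theta2 σ h n ≤ ∑ i ∈ Finset.range m', vs' σ c ((n : ℝ) * h + i * c) := by
      rw [theta2_eq σ hh.le]
      have hsum : ∑ i ∈ Finset.range m', vs' σ c ((n : ℝ) * h + i * c)
          = ∫ s in ((n : ℝ) * h)..((n : ℝ) * h + (m' : ℝ) * c), fbar σ s := by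
        rw [← sum_fbar_blocks σ hσ ((n : ℝ) * h) c m']
        apply Finset.sum_congr rfl
        intro i _
        rw [vs']
        congr 1
        ring
      rw [hsum, th']
      apply integral_fbar_mono σ hσ (le_refl _) (by nlinarith [Nat.cast_nonneg (α := ℝ) n])
      nlinarith
    -- g chain
    have hstep1 : Sterm σ h εS n ≤ Real.sqrt m' *
        ∑ i ∈ Finset.range m', g ε₁ (vs' σ c ((n : ℝ) * h + i * c)) := by
      have h0 : 0 ≤ theta2 σ h n := by
        rw [theta2_eq σ hh.le]; exact th'_nonneg σ hσ hh.le n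
      have hmr : (0 : ℝ) < Real.sqrt m' := Real.sqrt_pos.mpr (by exact_mod_cast hm'pos)
      calc Sterm σ h εS n = g εS (theta2 σ h n) := Sterm_eq_g σ h εS n
        _ ≤ g εS (∑ i ∈ Finset.range m', vs' σ c ((n : ℝ) * h + i * c)) := g_mono _ h0 hθ
        _ ≤ Real.sqrt ((m' : ℕ) : ℝ) * ∑ i ∈ Finset.range m',
              g (εS / Real.sqrt ((m' : ℕ) : ℝ)) (vs' σ c ((n : ℝ) * h + i * c)) :=
            g_sum_le εS m' hm'pos _ (fun i => vs'_nonneg σ hσ hc.le _)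
        _ = Real.sqrt m' * ∑ i ∈ Finset.range m', g ε₁ (vs' σ c ((n : ℝ) * h + i * c)) := by
            rw [hεS, mul_div_cancel_left₀ _ (ne_of_gt hmr)]
    -- per-i integral bound
    have hstep2 : ∀ i : ℕ, i < m' →
        ENNReal.ofReal c * ENNReal.ofReal (g ε₁ (vs' σ c ((n : ℝ) * h + i * c)))
          ≤ ENNReal.ofReal (Real.sqrt 2) * 2 * ∫⁻ t in A n, G t := by
      intro i hi
      set ti : ℝ := (n : ℝ) * h + i * c with hti
      have hti1 : ti ≤ (n : ℝ) * h + h := by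
        rw [hti]
        have : (i : ℝ) ≤ (m' : ℝ) - 1 := by
          have : (i : ℝ) + 1 ≤ m' := by exact_mod_cast hi
          linarith
        nlinarith
      -- pointwise bound on Ico (ti - c) ti
      have hpt : ∀ t ∈ Set.Ico (ti - c) ti,
          ENNReal.ofReal (g ε₁ (vs' σ c ti))
            ≤ ENNReal.ofReal (Real.sqrt 2) * (G t + G (t + c)) := by
        intro t ht
        have hv : vs' σ c ti ≤ vs' σ c t + vs' σ c (t + c) := by
          have hadd : vs' σ c t + vs' σ c (t + c) = ∫ s in t..(t + 2 * c), fbar σ s := by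
            rw [vs', vs']
            rw [show t + c + c = t + 2 * c by ring]
            exact intervalIntegral.integral_add_adjacent_intervals
              (fbar_intervalIntegrable σ hσ _ _) (fbar_intervalIntegrable σ hσ _ _)
          rw [hadd, vs']
          apply integral_fbar_mono σ hσ (by linarith [ht.2]) (by linarith)
            (by have := ht.1; linarith)
        calc ENNReal.ofReal (g ε₁ (vs' σ c ti))
            ≤ ENNReal.ofReal (Real.sqrt 2 * (g ε (vs' σ c t) + g ε (vs' σ c (t + c)))) := by
              apply ENNReal.ofReal_le_ofReal
              have := g_pair ε₁ (vs' σ c t) (vs' σ c (t + c))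
                (vs'_nonneg σ hσ hc.le t) (vs'_nonneg σ hσ hc.le (t + c))
              have hdiv : ε₁ / Real.sqrt 2 = ε := by
                rw [hε₁, mul_div_cancel_left₀ _ (by positivity)]
              rw [hdiv] at this
              exact le_trans (g_mono ε₁ (vs'_nonneg σ hσ hc.le ti) hv) this
          _ ≤ ENNReal.ofReal (Real.sqrt 2) * (G t + G (t + c)) := by
              rw [ENNReal.ofReal_mul (by positivity)]
              apply mul_le_mul_of_nonneg_left _ zero_le
              rw [hG]
              exact le_trans (ENNReal.ofReal_add_le) (le_refl _)
      -- integrate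
      have hvol : volume (Set.Ico (ti - c) ti) = ENNReal.ofReal c := by
        rw [Real.volume_Ico]; congr 1; ring
      have hic : (0:ℝ) ≤ (i : ℝ) * c := by positivity
      have hsub1 : Set.Ico (ti - c) ti ⊆ A n := by
        intro t ht
        obtain ⟨h1, h2⟩ := ht
        rw [hti] at h1 h2
        constructor
        · linarith
        · have h3 : (n : ℝ) * h + (i : ℝ) * c ≤ (n : ℝ) * h + h := hti1
          linarith
      have hsub2 : Set.Ico ti (ti + c) ⊆ A n := by
        intro t ht
        obtain ⟨h1, h2⟩ := ht
        rw [hti] at h1 h2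
        constructor
        · linarith
        · have h3 : (n : ℝ) * h + (i : ℝ) * c ≤ (n : ℝ) * h + h := hti1
          linarith
      calc ENNReal.ofReal c * ENNReal.ofReal (g ε₁ (vs' σ c ti))
          = ∫⁻ _t in Set.Ico (ti - c) ti, ENNReal.ofReal (g ε₁ (vs' σ c ti)) := by
            rw [setLIntegral_const, hvol]; ring
        _ ≤ ∫⁻ t in Set.Ico (ti - c) ti, ENNReal.ofReal (Real.sqrt 2) * (G t + G (t + c)) := by
            apply setLIntegral_mono
            · exact (measurable_const.mul ((hGmeas.add
                (hGmeas.comp (measurable_id.add_const c)))))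
            · exact hpt
        _ = ENNReal.ofReal (Real.sqrt 2) * ((∫⁻ t in Set.Ico (ti - c) ti, G t)
              + ∫⁻ t in Set.Ico (ti - c) ti, G (t + c)) := by
            have hGc : Measurable fun t : ℝ => G (t + c) :=
              hGmeas.comp (measurable_add_const c)
            rw [lintegral_const_mul _ (show Measurable fun t => G t + G (t + c) from hGmeas.add hGc)]
            rw [lintegral_add_left hGmeas]
        _ = ENNReal.ofReal (Real.sqrt 2) * ((∫⁻ t in Set.Ico (ti - c) ti, G t)
              + ∫⁻ t in Set.Ico ti (ti + c), G t) := by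
            congr 2
            have hmp : MeasurePreserving (fun x : ℝ => x + c) volume volume :=
              measurePreserving_add_right volume c
            have hemb : MeasurableEmbedding (fun x : ℝ => x + c) :=
              (MeasurableEquiv.addRight c).measurableEmbedding
            rw [hmp.setLIntegral_comp_emb hemb G (Set.Ico (ti - c) ti)]
            rw [Set.image_add_const_Ico]
            congr 1 <;> ring
        _ ≤ ENNReal.ofReal (Real.sqrt 2) * ((∫⁻ t in A n, G t) + ∫⁻ t in A n, G t) := by
            apply mul_le_mul_of_nonneg_left _ zero_le
            exact add_le_add (lintegral_mono_set hsub1) (lintegral_mono_set hsub2)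
        _ = ENNReal.ofReal (Real.sqrt 2) * 2 * ∫⁻ t in A n, G t := by
            ring
    -- combine step1 and step2
    calc ENNReal.ofReal c * ENNReal.ofReal (Sterm σ h εS n)
        ≤ ENNReal.ofReal c * (ENNReal.ofReal (Real.sqrt m') *
            ∑ i ∈ Finset.range m', ENNReal.ofReal (g ε₁ (vs' σ c ((n : ℝ) * h + i * c)))) := by
          apply mul_le_mul_of_nonneg_left _ zero_le
          rw [← ENNReal.ofReal_sum_of_nonneg (fun i _ => g_nonneg _ _),
            ← ENNReal.ofReal_mul (Real.sqrt_nonneg _)]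
          exact ENNReal.ofReal_le_ofReal hstep1
      _ = ENNReal.ofReal (Real.sqrt m') *
            ∑ i ∈ Finset.range m', ENNReal.ofReal c *
              ENNReal.ofReal (g ε₁ (vs' σ c ((n : ℝ) * h + i * c))) := by
          simp only [Finset.mul_sum]
          apply Finset.sum_congr rfl
          intro i _
          ring
      _ ≤ ENNReal.ofReal (Real.sqrt m') *
            ∑ _i ∈ Finset.range m', ENNReal.ofReal (Real.sqrt 2) * 2 * ∫⁻ t in A n, G t := by
          apply mul_le_mul_of_nonneg_left _ zero_le
          exact Finset.sum_le_sum fun i hi => hstep2 i (Finset.mem_range.mp hi)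
      _ = (ENNReal.ofReal (Real.sqrt m') * (m' : ENNReal) *
            (ENNReal.ofReal (Real.sqrt 2) * 2)) * ∫⁻ t in A n, G t := by
          rw [Finset.sum_const, Finset.card_range, nsmul_eq_mul]
          ring
  -- counting: each t lies in at most M of the sets A (k+N)
  have hcount : ∀ t : ℝ, (∑' k : ℕ, (A (k + N)).indicator G t)
      ≤ (M : ENNReal) * (Set.Ici (0:ℝ)).indicator G t := by
    intro t
    by_cases ht : 0 ≤ t
    · set b : ℕ := ⌊(t + c) / h⌋₊ with hb
      have hmem : ∀ k : ℕ, t ∈ A (k + N) → k ∈ Finset.Icc (b - (N + 2 * mb + 1)) (b - N) := by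
        intro k hk
        obtain ⟨hk1, hk2⟩ := hk
        push_cast at hk1 hk2
        have hkN1 : k + N ≤ b := by
          apply Nat.le_floor
          push_cast
          rw [le_div_iff₀ hh]
          linarith
        have hkN2 : b ≤ k + N + (2 * mb + 1) := by
          by_contra hcon
          push_neg at hcon
          have h1 : ((k + N + (2 * mb + 1) + 1 : ℕ) : ℝ) ≤ b := by exact_mod_cast hcon
          have h2 : (b : ℝ) ≤ (t + c) / h := Nat.floor_le (by positivity)
          have hNcast : ((N : ℕ) : ℝ) = (mb : ℝ) + 1 := by rw [hN]; push_cast; ring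
          have h3 : (t + c) / h < (k : ℝ) + ((mb : ℝ) + 1) + 2 + 2 * mb := by
            rw [div_lt_iff₀ hh]
            have h4 : c / h ≤ (mb : ℝ) := Nat.le_ceil _
            rw [div_le_iff₀ hh] at h4
            nlinarith
          push_cast at h1
          linarith
        simp only [Finset.mem_Icc]
        omega
      rw [Set.indicator_of_mem (Set.mem_Ici.mpr ht) G]
      calc (∑' k : ℕ, (A (k + N)).indicator G t)
          = ∑ k ∈ Finset.Icc (b - (N + 2 * mb + 1)) (b - N), (A (k + N)).indicator G t := by
            apply tsum_eq_sum
            intro k hk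
            apply Set.indicator_of_notMem
            intro hmem'
            exact hk (hmem k hmem')
        _ ≤ (Finset.Icc (b - (N + 2 * mb + 1)) (b - N)).card • G t := by
            apply Finset.sum_le_card_nsmul
            intro k _
            exact Set.indicator_le_self _ _ t
        _ ≤ (M : ENNReal) * G t := by
            rw [nsmul_eq_mul]
            apply mul_le_mul_left
            have hcard : (Finset.Icc (b - (N + 2 * mb + 1)) (b - N)).card ≤ M := by
              rw [Nat.card_Icc]
              omega
            exact_mod_cast Nat.cast_le.mpr hcard
    · have hzero : ∀ k : ℕ, (A (k + N)).indicator G t = 0 := by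
        intro k
        apply Set.indicator_of_notMem
        intro hmem'
        apply ht
        have h1 := hmem'.1
        push_cast at h1
        have hNcast : ((N : ℕ) : ℝ) = (mb : ℝ) + 1 := by rw [hN]; push_cast; ring
        have hNn : c ≤ ((k : ℝ) + ((mb : ℝ) + 1)) * h := by
          have h2 : ((mb : ℝ) + 1) * h ≤ ((k : ℝ) + ((mb : ℝ) + 1)) * h := by
            nlinarith [Nat.cast_nonneg (α := ℝ) k]
          rw [hNcast] at hNh
          linarith
        rw [hNcast] at h1
        linarith
      have hz : (∑' k : ℕ, (A (k + N)).indicator G t) = 0 := by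
        rw [tsum_congr hzero, tsum_zero]
      rw [hz]
      exact zero_le
  have hsumA : (∑' k : ℕ, ∫⁻ t in A (k + N), G t)
      ≤ (M : ENNReal) * ∫⁻ t in Set.Ici (0:ℝ), G t := by
    calc (∑' k : ℕ, ∫⁻ t in A (k + N), G t)
        = ∑' k : ℕ, ∫⁻ t, (A (k + N)).indicator G t := by
          apply tsum_congr
          intro k
          rw [lintegral_indicator measurableSet_Ico]
      _ = ∫⁻ t, ∑' k : ℕ, (A (k + N)).indicator G t := by
          rw [← lintegral_tsum]
          intro k
          exact (hGmeas.indicator measurableSet_Ico).aemeasurable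
      _ ≤ ∫⁻ t, (M : ENNReal) * (Set.Ici (0:ℝ)).indicator G t := lintegral_mono hcount
      _ = (M : ENNReal) * ∫⁻ t, (Set.Ici (0:ℝ)).indicator G t :=
          lintegral_const_mul _ (hGmeas.indicator measurableSet_Ici)
      _ = (M : ENNReal) * ∫⁻ t in Set.Ici (0:ℝ), G t := by
          rw [lintegral_indicator measurableSet_Ici]
  have hItot : (∫⁻ t in Set.Ici (0:ℝ), G t) < ⊤ := by
    rw [IFinite] at hI
    refine lt_of_le_of_lt (le_of_eq ?_) hI
    apply setLIntegral_congr_fun measurableSet_Ici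
    exact fun t ht => hGI t ht
  set C : ENNReal := ENNReal.ofReal (Real.sqrt m') * (m' : ENNReal) *
    (ENNReal.ofReal (Real.sqrt 2) * 2) with hC
  have hCtop : C ≠ ⊤ := by finiteness
  have hc0 : (ENNReal.ofReal c) ≠ 0 := (ENNReal.ofReal_pos.mpr hc).ne'
  have htail : (∑' k : ℕ, ENNReal.ofReal (Sterm σ h εS (k + N))) < ⊤ := by
    have h1 : ENNReal.ofReal c * (∑' k : ℕ, ENNReal.ofReal (Sterm σ h εS (k + N)))
        ≤ C * ((M : ENNReal) * ∫⁻ t in Set.Ici (0:ℝ), G t) := by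
      rw [← ENNReal.tsum_mul_left]
      calc (∑' k : ℕ, ENNReal.ofReal c * ENNReal.ofReal (Sterm σ h εS (k + N)))
          ≤ ∑' k : ℕ, C * ∫⁻ t in A (k + N), G t :=
            ENNReal.tsum_le_tsum fun k => key (k + N) (Nat.le_add_left N k)
        _ = C * ∑' k : ℕ, ∫⁻ t in A (k + N), G t := ENNReal.tsum_mul_left
        _ ≤ C * ((M : ENNReal) * ∫⁻ t in Set.Ici (0:ℝ), G t) := mul_le_mul_right hsumA _
    have hfin : C * ((M : ENNReal) * ∫⁻ t in Set.Ici (0:ℝ), G t) ≠ ⊤ :=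
      ENNReal.mul_ne_top hCtop (ENNReal.mul_ne_top (ENNReal.natCast_ne_top M) hItot.ne)
    have h2 : (∑' k : ℕ, ENNReal.ofReal (Sterm σ h εS (k + N)))
        ≤ C * ((M : ENNReal) * ∫⁻ t in Set.Ici (0:ℝ), G t) / ENNReal.ofReal c :=
      (ENNReal.le_div_iff_mul_le (Or.inl hc0) (Or.inl ENNReal.ofReal_ne_top)).mpr
        (by rwa [mul_comm] at h1)
    exact lt_of_le_of_lt h2 (ENNReal.div_lt_top hfin hc0)
  have hsummable : Summable fun k : ℕ => Sterm σ h εS (k + N) := by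
    have h1 := ENNReal.summable_toReal htail.ne
    apply h1.congr
    intro k
    rw [ENNReal.toReal_ofReal (Sterm_nonneg σ h εS (k + N))]
  have hbase : Summable fun n : ℕ => Sterm σ h εS n := (summable_nat_add_iff N).mp hsummable
  exact (summable_nat_add_iff 1).mpr hbase

lemma all_imp {P Q : ℝ → Prop} {K : ℝ} (hK : 0 < K)
    (hPQ : ∀ ε, 0 < ε → P ε → Q (K * ε)) (hP : ∀ ε, 0 < ε → P ε) :
    ∀ ε, 0 < ε → Q ε := by
  intro ε hε
  have h1 := hPQ (ε / K) (by positivity) (hP _ (by positivity))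
  rwa [show K * (ε / K) = ε by field_simp] at h1

lemma none_imp {P Q : ℝ → Prop} {K : ℝ} (hK : 0 < K)
    (hQP : ∀ ε, 0 < ε → Q ε → P (K * ε)) (hP : ∀ ε, 0 < ε → ¬ P ε) :
    ∀ ε, 0 < ε → ¬ Q ε :=
  fun ε hε hQ => hP (K * ε) (by positivity) (hQP ε hε hQ)

lemma threshold_imp {P Q : ℝ → Prop} {K1 K2 : ℝ} (hK1 : 0 < K1) (hK2 : 0 < K2)
    (hQmono : ∀ a b, 0 < a → a ≤ b → Q a → Q b)
    (hPQ : ∀ ε, 0 < ε → P ε → Q (K1 * ε))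
    (hQP : ∀ ε, 0 < ε → Q ε → P (K2 * ε))
    (H : ∃ ε', 0 < ε' ∧ (∀ ε, ε' < ε → P ε) ∧ (∀ ε, 0 < ε → ε < ε' → ¬ P ε)) :
    ∃ εs, 0 < εs ∧ (∀ ε, εs < ε → Q ε) ∧ (∀ ε, 0 < ε → ε < εs → ¬ Q ε) := by
  obtain ⟨ε', hε', hPfin, hPinf⟩ := H
  set B : Set ℝ := {x | 0 < x ∧ Q x} with hB
  have hBne : B.Nonempty := ⟨K1 * (ε' + 1), by positivity,
    hPQ _ (by positivity) (hPfin _ (by linarith))⟩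
  have hlow : ∀ b ∈ B, ε' / K2 ≤ b := by
    intro b hb
    by_contra hcon
    push_neg at hcon
    have hb0 : 0 < b := hb.1
    exact hPinf (K2 * b) (by positivity)
      (by rw [mul_comm]; exact (lt_div_iff₀ hK2).mp hcon) (hQP b hb0 hb.2)
  have hbdd : BddBelow B := ⟨ε' / K2, hlow⟩
  have hpos : 0 < sInf B := lt_of_lt_of_le (by positivity) (le_csInf hBne hlow)
  refine ⟨sInf B, hpos, ?_, ?_⟩
  · intro ε hεs
    obtain ⟨b, hbB, hbε⟩ := (csInf_lt_iff hbdd hBne).mp hεs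
    exact hQmono b ε hbB.1 hbε.le hbB.2
  · intro ε hε0 hεlt hQε
    exact absurd (csInf_le hbdd ⟨hε0, hQε⟩) (not_le.mpr hεlt)

theorem stmt_17 (d r : ℕ) (hd : 1 ≤ d) (hr : 1 ≤ r)
    (σ : ℝ → Matrix (Fin d) (Fin r) ℝ) (hσ : ContinuousOn σ (Set.Ici 0))
    (h c : ℝ) (hh : 0 < h) (hc : 0 < c) :
    ((∀ ε : ℝ, 0 < ε → SFinite σ h ε) ↔ (∀ ε : ℝ, 0 < ε → IFinite σ c ε)) ∧
    ((∀ ε : ℝ, 0 < ε → ¬ SFinite σ h ε) ↔ (∀ ε : ℝ, 0 < ε → ¬ IFinite σ c ε)) ∧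
    ((∃ ε' : ℝ, 0 < ε' ∧ (∀ ε : ℝ, ε' < ε → SFinite σ h ε) ∧
        (∀ ε : ℝ, 0 < ε → ε < ε' → ¬ SFinite σ h ε)) ↔
      (∃ εs : ℝ, 0 < εs ∧ (∀ ε : ℝ, εs < ε → IFinite σ c ε) ∧
        (∀ ε : ℝ, 0 < ε → ε < εs → ¬ IFinite σ c ε))) := by
  set K1 : ℝ := Real.sqrt ((⌈c / h⌉₊ : ℝ) + 1) with hK1
  set K2 : ℝ := Real.sqrt ((⌈h / c⌉₊ : ℝ)) * Real.sqrt 2 with hK2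
  have hK1pos : 0 < K1 := Real.sqrt_pos.mpr (by positivity)
  have hK2pos : 0 < K2 := by
    apply mul_pos _ (Real.sqrt_pos.mpr (by norm_num))
    apply Real.sqrt_pos.mpr
    exact_mod_cast Nat.ceil_pos.mpr (by positivity : (0:ℝ) < h / c)
  have hPQ : ∀ ε, 0 < ε → SFinite σ h ε → IFinite σ c (K1 * ε) :=
    fun ε hε hS => SI σ hσ hh hc hε hS
  have hQP : ∀ ε, 0 < ε → IFinite σ c ε → SFinite σ h (K2 * ε) := by
    intro ε hε hI
    have h1 := IS σ hσ hh hc hε hI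
    rwa [show Real.sqrt ((⌈h / c⌉₊ : ℝ)) * (Real.sqrt 2 * ε) = K2 * ε by rw [hK2]; ring] at h1
  have hSmono : ∀ a b : ℝ, 0 < a → a ≤ b → SFinite σ h a → SFinite σ h b :=
    fun a b ha hab => SFinite_mono σ ha hab
  have hImono : ∀ a b : ℝ, 0 < a → a ≤ b → IFinite σ c a → IFinite σ c b :=
    fun a b ha hab => IFinite_mono σ ha hab
  refine ⟨⟨fun H => all_imp hK1pos hPQ H, fun H => all_imp hK2pos hQP H⟩,
    ⟨fun H => none_imp hK2pos hQP H, fun H => none_imp hK1pos hPQ H⟩,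
    ⟨fun H => threshold_imp hK1pos hK2pos hImono hPQ hQP H,
     fun H => threshold_imp hK2pos hK1pos hSmono hQP hPQ H⟩⟩
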